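/- Let 0 < p < 1 and let f, g : ℝ → ℝ with f(x,t) = (1-p)t + c·D(x,t) where c > 0 and D is positive with continuous second derivatives. Then the function u(x,t) = f(x,t)^{1/(1-p)} satisfies the pointwise identity u_t - u_xx - u^p = -(p/(1-p)²) c² (D_x)² f^{(2p-1)/(1-p)} whenever D_t = D_xx; in particular u_t - u_xx - u^p ≤ 0. -/

import Mathlib

/-- Subsolution identity: if `D` is a positive solution of the heat equation and
`f(x,t) = (1-p)t + c D(x,t)`, then `u = f^{1/(1-p)}` satisfies
`u_t - u_xx - u^p = -(p/(1-p)²) c² (D_x)² f^{(2p-1)/(1-p)} ≤ 0`. -/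
theorem subsolution_identity (p c : ℝ) (hp : 0 < p) (hp1 : p < 1) (hc : 0 < c)
    (D Dt Dxx : ℝ → ℝ → ℝ) (Dx : ℝ → ℝ → ℝ) (x t : ℝ) (ht : 0 < t)
    (hDpos : ∀ y s, 0 < s → 0 < D y s)
    (hheat : Dt x t = Dxx x t)
    (hDt : HasDerivAt (fun s => D x s) (Dt x t) t)
    (hDx : ∀ y, HasDerivAt (fun z => D z t) (Dx y t) y)
    (hDxx : HasDerivAt (fun y => Dx y t) (Dxx x t) x) :
    deriv (fun s => ((1 - p) * s + c * D x s) ^ (1 / (1 - p))) t -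
        deriv (fun y => deriv
          (fun z => ((1 - p) * t + c * D z t) ^ (1 / (1 - p))) y) x -
        (((1 - p) * t + c * D x t) ^ (1 / (1 - p))) ^ p
      = -(p / (1 - p) ^ 2) * c ^ 2 * (Dx x t) ^ 2 *
          ((1 - p) * t + c * D x t) ^ ((2 * p - 1) / (1 - p)) ∧
    deriv (fun s => ((1 - p) * s + c * D x s) ^ (1 / (1 - p))) t -
        deriv (fun y => deriv
          (fun z => ((1 - p) * t + c * D z t) ^ (1 / (1 - p))) y) x -
        (((1 - p) * t + c * D x t) ^ (1 / (1 - p))) ^ p ≤ 0 := by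
  have h1p : (0:ℝ) < 1 - p := by linarith
  set a : ℝ := 1 / (1 - p) with ha
  have fpos : ∀ y, 0 < (1 - p) * t + c * D y t := fun y =>
    add_pos (mul_pos h1p ht) (mul_pos hc (hDpos y t ht))
  -- time derivative
  have hft : HasDerivAt (fun s => (1 - p) * s + c * D x s)
      ((1 - p) + c * Dt x t) t := by
    have := ((hasDerivAt_id t).const_mul (1 - p)).add (hDt.const_mul c)
    simpa [Pi.add_def] using this
  have hut : HasDerivAt (fun s => ((1 - p) * s + c * D x s) ^ a)
      (((1 - p) + c * Dt x t) * a * ((1 - p) * t + c * D x t) ^ (a - 1)) t :=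
    hft.rpow_const (Or.inl (fpos x).ne')
  -- spatial derivative at every point
  have hfx : ∀ y, HasDerivAt (fun z => (1 - p) * t + c * D z t) (c * Dx y t) y := by
    intro y
    simpa using (((hDx y).const_mul c).const_add ((1 - p) * t))
  have hux : ∀ y, HasDerivAt (fun z => ((1 - p) * t + c * D z t) ^ a)
      ((c * Dx y t) * a * ((1 - p) * t + c * D y t) ^ (a - 1)) y := fun y =>
    (hfx y).rpow_const (Or.inl (fpos y).ne')
  have hderiv1 : (fun y => deriv (fun z => ((1 - p) * t + c * D z t) ^ a) y)
      = fun y => (c * Dx y t) * a * ((1 - p) * t + c * D y t) ^ (a - 1) :=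
    funext fun y => (hux y).deriv
  -- second spatial derivative
  have hg1 : HasDerivAt (fun y => (c * Dx y t) * a) ((c * Dxx x t) * a) x :=
    (hDxx.const_mul c).mul_const a
  have hg2 : HasDerivAt (fun y => ((1 - p) * t + c * D y t) ^ (a - 1))
      ((c * Dx x t) * (a - 1) * ((1 - p) * t + c * D x t) ^ (a - 1 - 1)) x :=
    (hfx x).rpow_const (Or.inl (fpos x).ne')
  have huxx : HasDerivAt
      (fun y => (c * Dx y t) * a * ((1 - p) * t + c * D y t) ^ (a - 1))
      ((c * Dxx x t) * a * ((1 - p) * t + c * D x t) ^ (a - 1) +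
        (c * Dx x t) * a *
          ((c * Dx x t) * (a - 1) * ((1 - p) * t + c * D x t) ^ (a - 1 - 1))) x :=
    hg1.mul hg2
  -- abbreviations
  set f : ℝ := (1 - p) * t + c * D x t with hf
  have hfpos : 0 < f := fpos x
  have hap : a * p = a - 1 := by
    rw [ha]; field_simp; ring
  have hup : (f ^ a) ^ p = f ^ (a - 1) := by
    rw [← Real.rpow_mul hfpos.le, hap]
  have e1 : a - 1 - 1 = (2 * p - 1) / (1 - p) := by
    rw [ha]; field_simp; ring
  have e2 : (1 - p) * a = 1 := by
    rw [ha]; field_simp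
  have e4 : a - 1 = p / (1 - p) := by
    rw [ha]; field_simp
    ring
  have e3 : a * (a - 1) = p / (1 - p) ^ 2 := by
    rw [e4, ha, div_mul_div_comm, one_mul, sq]
  have key : deriv (fun s => ((1 - p) * s + c * D x s) ^ a) t -
      deriv (fun y => deriv (fun z => ((1 - p) * t + c * D z t) ^ a) y) x -
      (f ^ a) ^ p
      = -(p / (1 - p) ^ 2) * c ^ 2 * (Dx x t) ^ 2 * f ^ ((2 * p - 1) / (1 - p)) := by
    rw [hut.deriv, hderiv1, huxx.deriv, hup, hheat, ← e1]
    linear_combination (f ^ (a - 1)) * e2 - c ^ 2 * (Dx x t) ^ 2 * (f ^ (a - 1 - 1)) * e3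
  refine ⟨key, ?_⟩
  rw [key]
  have h1 : (0:ℝ) ≤ f ^ ((2 * p - 1) / (1 - p)) := Real.rpow_nonneg hfpos.le _
  have h2 : (0:ℝ) < p / (1 - p) ^ 2 := div_pos hp (by positivity)
  have hA : (0:ℝ) ≤ p / (1 - p) ^ 2 * c ^ 2 * Dx x t ^ 2 * f ^ ((2 * p - 1) / (1 - p)) :=
    mul_nonneg (mul_nonneg (mul_nonneg h2.le (sq_nonneg c)) (sq_nonneg _)) h1
  linarith [hA, (by ring : -(p / (1 - p) ^ 2) * c ^ 2 * Dx x t ^ 2 * f ^ ((2 * p - 1) / (1 - p)) = -(p / (1 - p) ^ 2 * c ^ 2 * Dx x t ^ 2 * f ^ ((2 * p - 1) / (1 - p))))]
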